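/- (One-step error accumulation with noise.) Fix Δt ∈ ℝ and let F : ℝ⁹ → ℝ⁹ be the linear map (ω, v, x) ↦ (ω, v, x + Δt·v). Let T̄_k ∈ SE₂(3), ξ_k, η_k ∈ ℝ⁹, Υ_k ∈ SE₂(3), Γ_k an invertible 5×5 real matrix, and Φ = Φ_Δt. Define T_k := T̄_k exp_m(ξ_k^∧), the noisy propagation T_{k+1} := Γ_k Φ(T_k) Υ_k exp_m(η_k^∧), and the noise-free propagation T̄_{k+1} := Γ_k Φ(T̄_k) Υ_k. Then T̄_{k+1}⁻¹ T_{k+1} = exp_m((F_k ξ_k)^∧) exp_m(η_k^∧), where F_k := Ad_{Υ_k⁻¹} F. -/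

import Mathlib

open Matrix

noncomputable section

abbrev M3 := Matrix (Fin 3) (Fin 3) ℝ
abbrev M5 := Matrix (Fin 5) (Fin 5) ℝ
abbrev V3 := Fin 3 → ℝ
abbrev V9 := V3 × V3 × V3

/-- Skew-symmetric cross-product matrix `(ω)ₓ`. -/
def skew (ω : V3) : M3 := !![0, -ω 2, ω 1; ω 2, 0, -ω 0; -ω 1, ω 0, 0]

/-- 5×5 block matrix `[[A, v, x],[0₁ₓ₃, d, 0],[0₁ₓ₃, 0, e]]`. -/
def blk (A : M3) (v x : V3) (d e : ℝ) : M5 :=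
  !![A 0 0, A 0 1, A 0 2, v 0, x 0;
     A 1 0, A 1 1, A 1 2, v 1, x 1;
     A 2 0, A 2 1, A 2 2, v 2, x 2;
     0, 0, 0, d, 0;
     0, 0, 0, 0, e]

/-- Element of `SE₂(3)` built from rotation `R`, velocity `V`, position `X`. -/
def se23 (R : M3) (V X : V3) : M5 := blk R V X 1 1

/-- The hat map `ξ^∧` of `ξ = (ω, v, x) ∈ ℝ⁹`. -/
def hat (ω v x : V3) : M5 := blk (skew ω) v x 0 0

def hat9 (ξ : V9) : M5 := hat ξ.1 ξ.2.1 ξ.2.2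

def IsSO3 (R : M3) : Prop := Rᵀ * R = 1 ∧ R.det = 1

def IsSE23 (T : M5) : Prop := ∃ R V X, IsSO3 R ∧ T = se23 R V X

/-- Rotation block of a 5×5 matrix. -/
def Rof (T : M5) : M3 := Matrix.of fun i j => T (Fin.castLE (by omega) i) (Fin.castLE (by omega) j)

/-- Velocity column of a 5×5 matrix. -/
def Vof (T : M5) : V3 := fun i => T (Fin.castLE (by omega) i) 3

/-- Position column of a 5×5 matrix. -/
def Xof (T : M5) : V3 := fun i => T (Fin.castLE (by omega) i) 4

/-- Adjoint of `T ∈ SE₂(3)` acting on `ξ = (ω, v, x) ∈ ℝ⁹`: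
  `[[R, 0, 0],[(V)ₓR, R, 0],[(X)ₓR, 0, R]]`. -/
def Ad (T : M5) (ξ : V9) : V9 :=
  (Rof T *ᵥ ξ.1,
   (skew (Vof T) * Rof T) *ᵥ ξ.1 + Rof T *ᵥ ξ.2.1,
   (skew (Xof T) * Rof T) *ᵥ ξ.1 + Rof T *ᵥ ξ.2.2)

/-- `f(T)` : places the velocity column of `T` in the position column. -/
def fmap (T : M5) : M5 := blk 0 0 (Vof T) 0 0

/-- `Φ_t` : maps `[[R,V,X],...]` to `[[R,V,X+tV],...]` (acting on the top three rows). -/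
def Phi (t : ℝ) (T : M5) : M5 :=
  Matrix.of fun i j => if (i : ℕ) < 3 ∧ (j : ℕ) = 4 then T i j + t * T i 3 else T i j

/-- The linear map `F : (ω,v,x) ↦ (ω, v, x + Δt·v)`. -/
def Fmap (Δt : ℝ) (ξ : V9) : V9 := (ξ.1, ξ.2.1, ξ.2.2 + Δt • ξ.2.1)

/-! ### Auxiliary material -/

set_option linter.unnecessarySeqFocus false
set_option linter.unreachableTactic false
set_option linter.unusedTactic false
set_option maxHeartbeats 1000000
set_option maxRecDepth 10000

lemma fv0 : ((0:Fin 5):ℕ) = 0 := rfl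
lemma fv1 : ((1:Fin 5):ℕ) = 1 := rfl
lemma fv2 : ((2:Fin 5):ℕ) = 2 := rfl
lemma fv3 : ((3:Fin 5):ℕ) = 3 := rfl
lemma fv4 : ((4:Fin 5):ℕ) = 4 := rfl

def Pmat (t : ℝ) : M5 := !![1,0,0,0,0; 0,1,0,0,0; 0,0,1,0,0; 0,0,0,1,t; 0,0,0,0,1]

lemma Pmat_mul (s t : ℝ) : Pmat s * Pmat t = Pmat (s+t) := by
  ext i j
  fin_cases i <;> fin_cases j <;>
    simp [Pmat, Matrix.mul_apply, Fin.sum_univ_five, Matrix.vecHead, Matrix.vecTail] <;> ring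

lemma Pmat_zero : Pmat 0 = 1 := by
  ext i j
  fin_cases i <;> fin_cases j <;>
    simp [Pmat, Matrix.one_apply, Matrix.vecHead, Matrix.vecTail]

lemma Pmat_mul_cancel (t : ℝ) : Pmat t * Pmat (-t) = 1 := by
  rw [Pmat_mul]; simp [Pmat_zero]

lemma Pmat_inv (t : ℝ) : (Pmat t)⁻¹ = Pmat (-t) :=
  Matrix.inv_eq_right_inv (Pmat_mul_cancel t)

lemma isUnit_Pmat (t : ℝ) : IsUnit (Pmat t) :=
  ⟨⟨Pmat t, Pmat (-t), Pmat_mul_cancel t, by rw [Pmat_mul]; simp [Pmat_zero]⟩, rfl⟩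

lemma hatFmap (t : ℝ) (ξ : V9) :
    Pmat (-t) * hat9 ξ * Pmat t = hat9 (Fmap t ξ) := by
  ext i j
  fin_cases i <;> fin_cases j <;>
    simp [Pmat, hat9, hat, Fmap, blk, skew, Matrix.mul_apply, Fin.sum_univ_five,
      Matrix.vecHead, Matrix.vecTail] <;> ring

def GoodRows (T : M5) : Prop :=
  T 3 0 = 0 ∧ T 3 1 = 0 ∧ T 3 2 = 0 ∧ T 3 3 = 1 ∧ T 3 4 = 0 ∧
  T 4 0 = 0 ∧ T 4 1 = 0 ∧ T 4 2 = 0 ∧ T 4 3 = 0 ∧ T 4 4 = 1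

lemma goodRows_se23 (R : M3) (V X : V3) : GoodRows (se23 R V X) := by
  refine ⟨?_,?_,?_,?_,?_,?_,?_,?_,?_,?_⟩ <;> rfl

lemma goodRows_mul {T S : M5} (hT : GoodRows T) (hS : GoodRows S) : GoodRows (T * S) := by
  obtain ⟨a1,a2,a3,a4,a5,a6,a7,a8,a9,a10⟩ := hT
  obtain ⟨b1,b2,b3,b4,b5,b6,b7,b8,b9,b10⟩ := hS
  refine ⟨?_,?_,?_,?_,?_,?_,?_,?_,?_,?_⟩ <;>
    simp [Matrix.mul_apply, Fin.sum_univ_five, a1,a2,a3,a4,a5,a6,a7,a8,a9,a10,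
      b1,b2,b3,b4,b5,b6,b7,b8,b9,b10]

lemma Phi_eq {T : M5} (t : ℝ) (h : GoodRows T) :
    Phi t T = Pmat (-t) * T * Pmat t := by
  obtain ⟨a1,a2,a3,a4,a5,a6,a7,a8,a9,a10⟩ := h
  ext i j
  fin_cases i <;> fin_cases j <;>
    simp [Phi, Pmat, Matrix.mul_apply, Matrix.vecMul, dotProduct, Fin.sum_univ_five,
      Matrix.vecHead, Matrix.vecTail, fv0, fv1, fv2, fv3, fv4,
      a1,a2,a3,a4,a5,a6,a7,a8,a9,a10] <;> ring

/-! ### skew and SO(3) -/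

lemma skew_cross (a b : V3) : skew a *ᵥ b = -(skew b *ᵥ a) := by
  funext i
  fin_cases i <;>
    simp [skew, Matrix.mulVec, dotProduct, Fin.sum_univ_three,
      Matrix.vecHead, Matrix.vecTail] <;> ring

lemma skew_conjA (A : M3) (v : V3) : Aᵀ * skew (A *ᵥ v) * A = A.det • skew v := by
  ext i j
  fin_cases i <;> fin_cases j <;>
    simp [skew, Matrix.mul_apply, Matrix.mulVec, dotProduct, Fin.sum_univ_three,
      Matrix.det_fin_three, Matrix.vecHead, Matrix.vecTail] <;> ring

lemma so3_skew {R : M3} (h1 : Rᵀ * R = 1) (h2 : R.det = 1) (v : V3) :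
    skew (R *ᵥ v) = R * skew v * Rᵀ := by
  have hRRt : R * Rᵀ = 1 := mul_eq_one_comm.mpr h1
  have key := skew_conjA R v
  rw [h2, one_smul] at key
  calc skew (R *ᵥ v) = (R * Rᵀ) * skew (R *ᵥ v) * (R * Rᵀ) := by rw [hRRt]; simp
    _ = R * (Rᵀ * skew (R *ᵥ v) * R) * Rᵀ := by noncomm_ring
    _ = R * skew v * Rᵀ := by rw [key]

/-! ### se23 block algebra -/

lemma se23_mul (R R' : M3) (V X V' X' : V3) :
    se23 R V X * se23 R' V' X' = se23 (R*R') (R *ᵥ V' + V) (R *ᵥ X' + X) := by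
  ext i j
  fin_cases i <;> fin_cases j <;>
    simp [se23, blk, Matrix.mul_apply, Matrix.mulVec, dotProduct,
      Fin.sum_univ_five, Fin.sum_univ_three, Matrix.vecHead, Matrix.vecTail] <;> ring

lemma se23_one : se23 1 0 0 = 1 := by
  ext i j
  fin_cases i <;> fin_cases j <;>
    simp [se23, blk, Matrix.one_apply, Matrix.vecHead, Matrix.vecTail]

lemma se23_mul_hat (R : M3) (V X ω v x : V3) :
    se23 R V X * hat ω v x = blk (R * skew ω) (R *ᵥ v) (R *ᵥ x) 0 0 := by
  ext i j
  fin_cases i <;> fin_cases j <;>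
    simp [se23, hat, blk, skew, Matrix.mul_apply, Matrix.mulVec, dotProduct,
      Fin.sum_univ_five, Fin.sum_univ_three, Matrix.vecHead, Matrix.vecTail] <;> ring

lemma hat_mul_se23 (R : M3) (V X ω v x : V3) :
    hat ω v x * se23 R V X = blk (skew ω * R) (skew ω *ᵥ V + v) (skew ω *ᵥ X + x) 0 0 := by
  ext i j
  fin_cases i <;> fin_cases j <;>
    simp [se23, hat, blk, skew, Matrix.mul_apply, Matrix.mulVec, dotProduct,
      Fin.sum_univ_five, Fin.sum_univ_three, Matrix.vecHead, Matrix.vecTail] <;> ring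

lemma se23_mul_inv {R : M3} (h1 : Rᵀ * R = 1) (V X : V3) :
    se23 R V X * se23 Rᵀ (-(Rᵀ *ᵥ V)) (-(Rᵀ *ᵥ X)) = 1 := by
  have hRRt : R * Rᵀ = 1 := mul_eq_one_comm.mpr h1
  rw [se23_mul, hRRt]
  rw [show R *ᵥ -(Rᵀ *ᵥ V) + V = 0 by
        rw [Matrix.mulVec_neg, Matrix.mulVec_mulVec, hRRt, Matrix.one_mulVec]; abel,
      show R *ᵥ -(Rᵀ *ᵥ X) + X = 0 by
        rw [Matrix.mulVec_neg, Matrix.mulVec_mulVec, hRRt, Matrix.one_mulVec]; abel,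
      se23_one]

lemma se23_inv_mul {R : M3} (h1 : Rᵀ * R = 1) (V X : V3) :
    se23 Rᵀ (-(Rᵀ *ᵥ V)) (-(Rᵀ *ᵥ X)) * se23 R V X = 1 :=
  mul_eq_one_comm.mp (se23_mul_inv h1 V X)

lemma isUnit_se23 {R : M3} (h1 : Rᵀ * R = 1) (V X : V3) : IsUnit (se23 R V X) :=
  ⟨⟨se23 R V X, se23 Rᵀ (-(Rᵀ *ᵥ V)) (-(Rᵀ *ᵥ X)), se23_mul_inv h1 V X,
    se23_inv_mul h1 V X⟩, rfl⟩

lemma se23_inv {R : M3} (h1 : Rᵀ * R = 1) (V X : V3) :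
    (se23 R V X)⁻¹ = se23 Rᵀ (-(Rᵀ *ᵥ V)) (-(Rᵀ *ᵥ X)) :=
  Matrix.inv_eq_right_inv (se23_mul_inv h1 V X)

lemma Rof_se23 (R : M3) (V X : V3) : Rof (se23 R V X) = R := by
  ext i j; fin_cases i <;> fin_cases j <;> rfl

lemma Vof_se23 (R : M3) (V X : V3) : Vof (se23 R V X) = V := by
  funext i; fin_cases i <;> rfl

lemma Xof_se23 (R : M3) (V X : V3) : Xof (se23 R V X) = X := by
  funext i; fin_cases i <;> rfl

lemma se23_conj_hat {R : M3} (h1 : Rᵀ * R = 1) (h2 : R.det = 1) (V X : V3) (ζ : V9) :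
    se23 R V X * hat9 ζ * (se23 R V X)⁻¹ = hat9 (Ad (se23 R V X) ζ) := by
  have key : se23 R V X * hat9 ζ = hat9 (Ad (se23 R V X) ζ) * se23 R V X := by
    simp only [hat9, Ad, Rof_se23, Vof_se23, Xof_se23]
    rw [se23_mul_hat, hat_mul_se23]
    have c1 : skew (R *ᵥ ζ.1) * R = R * skew ζ.1 := by
      rw [so3_skew h1 h2, mul_assoc, h1, mul_one]
    have c2 : skew (R *ᵥ ζ.1) *ᵥ V + ((skew V * R) *ᵥ ζ.1 + R *ᵥ ζ.2.1) = R *ᵥ ζ.2.1 := by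
      rw [← Matrix.mulVec_mulVec, skew_cross V (R *ᵥ ζ.1)]; abel
    have c3 : skew (R *ᵥ ζ.1) *ᵥ X + ((skew X * R) *ᵥ ζ.1 + R *ᵥ ζ.2.2) = R *ᵥ ζ.2.2 := by
      rw [← Matrix.mulVec_mulVec, skew_cross X (R *ᵥ ζ.1)]; abel
    rw [c1, c2, c3]
  have hdet : IsUnit (se23 R V X).det :=
    (Matrix.isUnit_iff_isUnit_det _).mp (isUnit_se23 h1 V X)
  rw [key, mul_assoc, Matrix.mul_nonsing_inv _ hdet, mul_one]

/-! ### rows of the exponential -/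

lemma exp_row_eq (A : M5) (i : Fin 5) (h : A i = 0) :
    NormedSpace.exp A i = (1 : M5) i := by
  letI : SeminormedRing M5 := Matrix.linftyOpSemiNormedRing
  letI : NormedRing M5 := Matrix.linftyOpNormedRing
  letI : NormedAlgebra ℝ M5 := Matrix.linftyOpNormedAlgebra
  have hsum : Summable (fun n : ℕ => ((n.factorial : ℝ))⁻¹ • A ^ n) :=
    NormedSpace.expSeries_summable' (𝕂 := ℝ) A
  let L0 : M5 →ₗ[ℝ] (Fin 5 → ℝ) :=
    { toFun := fun M => M i, map_add' := fun _ _ => rfl, map_smul' := fun _ _ => rfl }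
  let L : M5 →L[ℝ] (Fin 5 → ℝ) := ⟨L0, L0.continuous_of_finiteDimensional⟩
  have hrow : ∀ n : ℕ, n ≠ 0 → (A ^ n) i = 0 := by
    intro n hn
    obtain ⟨m, rfl⟩ := Nat.exists_eq_succ_of_ne_zero hn
    rw [pow_succ']
    funext j
    rw [Matrix.mul_apply]
    simp [congrFun h]
  have h1 : NormedSpace.exp A i = L (NormedSpace.exp A) := rfl
  rw [h1, NormedSpace.exp_eq_tsum (𝕂 := ℝ), L.map_tsum hsum]
  rw [tsum_eq_single 0]
  · simp [L, L0]; rfl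
  · intro n hn
    simp [L, L0, hrow n hn]; exact Or.inr (hrow n hn)

lemma hat9_row3 (ξ : V9) : hat9 ξ 3 = 0 := by
  funext j; fin_cases j <;> rfl

lemma hat9_row4 (ξ : V9) : hat9 ξ 4 = 0 := by
  funext j; fin_cases j <;> rfl

lemma goodRows_exp (ξ : V9) : GoodRows (NormedSpace.exp (hat9 ξ)) := by
  have h3 := exp_row_eq (hat9 ξ) 3 (hat9_row3 ξ)
  have h4 := exp_row_eq (hat9 ξ) 4 (hat9_row4 ξ)
  refine ⟨?_,?_,?_,?_,?_,?_,?_,?_,?_,?_⟩ <;>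
    simp [congrFun h3, congrFun h4, Matrix.one_apply]

lemma mul_cancel_left {A B : M5} (h : A * B = 1) (M : M5) : A * (B * M) = M := by
  rw [← mul_assoc, h, one_mul]

/-- one-step error accumulation with noise:
`Tbar_{k+1}⁻¹ T_{k+1} = exp_m((F_k ξ_k)^∧) exp_m(η_k^∧)` where `F_k = Ad_{Υ_k⁻¹} F`. -/
theorem stmt_14 (Δt : ℝ) (Tbar Υ : M5) (hT : IsSE23 Tbar) (hΥ : IsSE23 Υ)
    (Γ : M5) (hΓ : IsUnit Γ) (ξ η : V9) :
    (Γ * Phi Δt Tbar * Υ)⁻¹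
        * (Γ * Phi Δt (Tbar * NormedSpace.exp (hat9 ξ)) * Υ * NormedSpace.exp (hat9 η))
      = NormedSpace.exp (hat9 (Ad Υ⁻¹ (Fmap Δt ξ))) * NormedSpace.exp (hat9 η) := by
  obtain ⟨R, V, X, ⟨hR1, hR2⟩, rfl⟩ := hT
  obtain ⟨R2, V2, X2, ⟨hS1, hS2⟩, rfl⟩ := hΥ
  set E1 := NormedSpace.exp (hat9 ξ) with hE1
  set E2 := NormedSpace.exp (hat9 η) with hE2
  set Tb := se23 R V X with hTb
  set Υ := se23 R2 V2 X2 with hΥdef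
  set Pm := Pmat (-Δt) with hPm
  set Pp := Pmat Δt with hPp
  -- units and determinants
  have hTb_unit : IsUnit Tb := isUnit_se23 hR1 V X
  have hΥ_unit : IsUnit Υ := isUnit_se23 hS1 V2 X2
  have hΥ_det : IsUnit Υ.det := (Matrix.isUnit_iff_isUnit_det _).mp hΥ_unit
  have hTb_det : IsUnit Tb.det := (Matrix.isUnit_iff_isUnit_det _).mp hTb_unit
  have hΓ_det : IsUnit Γ.det := (Matrix.isUnit_iff_isUnit_det _).mp hΓ
  -- Phi as conjugation
  have hPhi1 : Phi Δt Tb = Pm * Tb * Pp := Phi_eq Δt (goodRows_se23 R V X)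
  have hPhi2 : Phi Δt (Tb * E1) = Pm * (Tb * E1) * Pp :=
    Phi_eq Δt (goodRows_mul (goodRows_se23 R V X) (goodRows_exp ξ))
  -- inverse of Pm, Pp
  have hPmInv : Pm⁻¹ = Pp := by rw [hPm, Pmat_inv, neg_neg]
  have hPpInv : Pp⁻¹ = Pm := by rw [hPp, Pmat_inv]
  -- the inverse of the noise-free propagation
  have hInvChain : (Γ * Phi Δt Tb * Υ)⁻¹ = Υ⁻¹ * (Pm * (Tb⁻¹ * (Pp * Γ⁻¹))) := by
    rw [hPhi1]
    simp only [Matrix.mul_inv_rev]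
    rw [hPmInv, hPpInv]
    simp only [mul_assoc]
  -- conjugation of exp by Pm
  have hExpF : NormedSpace.exp (hat9 (Fmap Δt ξ)) = Pm * E1 * Pp := by
    rw [← hatFmap Δt ξ, ← hPm, ← hPp, ← hPmInv, Matrix.exp_conj Pm _ (isUnit_Pmat _), hPmInv,
      hE1]
  -- conjugation of exp by Υ⁻¹
  have hΥinv : Υ⁻¹ = se23 R2ᵀ (-(R2ᵀ *ᵥ V2)) (-(R2ᵀ *ᵥ X2)) := se23_inv hS1 V2 X2
  have hS1' : (R2ᵀ)ᵀ * R2ᵀ = 1 := by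
    rw [Matrix.transpose_transpose]
    exact mul_eq_one_comm.mpr hS1
  have hS2' : (R2ᵀ).det = 1 := by rw [Matrix.det_transpose]; exact hS2
  have hconj : Υ⁻¹ * hat9 (Fmap Δt ξ) * (Υ⁻¹)⁻¹ = hat9 (Ad Υ⁻¹ (Fmap Δt ξ)) := by
    rw [hΥinv]
    exact se23_conj_hat hS1' hS2' _ _ _
  have hΥinvinv : (Υ⁻¹)⁻¹ = Υ := Matrix.nonsing_inv_nonsing_inv Υ hΥ_det
  have hΥinv_unit : IsUnit Υ⁻¹ := by
    rw [hΥinv]; exact isUnit_se23 hS1' _ _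
  have hExpAd : NormedSpace.exp (hat9 (Ad Υ⁻¹ (Fmap Δt ξ))) = Υ⁻¹ * (Pm * E1 * Pp) * Υ := by
    rw [← hconj, Matrix.exp_conj Υ⁻¹ _ hΥinv_unit, hΥinvinv, hExpF]
  have hΓl : Γ⁻¹ * Γ = 1 := Matrix.nonsing_inv_mul Γ hΓ_det
  have hPpPm : Pp * Pm = 1 := by rw [hPp, hPm]; exact Pmat_mul_cancel Δt
  have hTbl : Tb⁻¹ * Tb = 1 := Matrix.nonsing_inv_mul Tb hTb_det
  rw [hInvChain, hPhi2, hExpAd]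
  simp only [mul_assoc]
  rw [mul_cancel_left hΓl, mul_cancel_left hPpPm, mul_cancel_left hTbl]
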